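/- arXiv:2310.15846 — 3 statements merged into one kernel-verified Lean document; each statement's English description precedes it below -/
import Mathlib

section
/- Let g1 and g2 be unit vectors in R^3 with angle θ ∈ [0, π) between them, and let P_i = I - g_i g_i^T for i = 1,2. Then the smallest eigenvalue of P_1 + P_2 equals 1 - |cos θ|. -/
open Matrix Real
open scoped RealInnerProductSpace


lemma vmv (a b x : Fin 3 → ℝ) : vecMulVec a b *ᵥ x = (b ⬝ᵥ x) • a := by
  ext i
  simp only [mulVec, dotProduct, vecMulVec_apply, Pi.smul_apply, smul_eq_mul, Finset.sum_mul]
  exact Finset.sum_congr rfl fun j _ => by ring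


/-- Let `g₁, g₂` be unit vectors in `ℝ³` with angle `θ ∈ [0, π)` between them and
`Pᵢ = I - gᵢ gᵢᵀ`. Then the smallest eigenvalue of `P₁ + P₂` equals `1 - |cos θ|`. -/
theorem stmt_3 (g₁ g₂ : Fin 3 → ℝ) (hg₁ : g₁ ⬝ᵥ g₁ = 1) (hg₂ : g₂ ⬝ᵥ g₂ = 1)
    (θ : ℝ) (hθ : θ ∈ Set.Ico 0 π) (hcos : Real.cos θ = g₁ ⬝ᵥ g₂)
    (hS : ((1 - vecMulVec g₁ g₁) + (1 - vecMulVec g₂ g₂) :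
      Matrix (Fin 3) (Fin 3) ℝ).IsHermitian) :
    ⨅ i, hS.eigenvalues i = 1 - |Real.cos θ| := by
  set S : Matrix (Fin 3) (Fin 3) ℝ := (1 - vecMulVec g₁ g₁) + (1 - vecMulVec g₂ g₂) with hSdef
  set c : ℝ := g₁ ⬝ᵥ g₂ with hc
  have hcle : |c| ≤ 1 := hcos ▸ abs_cos_le_one θ
  rw [hcos]
  have hSmul : ∀ x : Fin 3 → ℝ, S *ᵥ x = x + x - (g₁ ⬝ᵥ x) • g₁ - (g₂ ⬝ᵥ x) • g₂ := by
    intro x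
    rw [hSdef, add_mulVec, sub_mulVec, sub_mulVec, one_mulVec, vmv, vmv]
    abel
  have hdot : ∀ x y : Fin 3 → ℝ, x ⬝ᵥ (S *ᵥ y)
      = x ⬝ᵥ y + x ⬝ᵥ y - (g₁ ⬝ᵥ y) * (x ⬝ᵥ g₁) - (g₂ ⬝ᵥ y) * (x ⬝ᵥ g₂) := by
    intro x y
    rw [hSmul]
    simp [dotProduct_sub, dotProduct_add, dotProduct_smul, smul_eq_mul]
  -- key quadratic form inequality
  have key : ∀ x : Fin 3 → ℝ, x ⬝ᵥ x = 1 → (g₁ ⬝ᵥ x)^2 + (g₂ ⬝ᵥ x)^2 ≤ 1 + |c| := by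
    intro x hx
    set a : ℝ := g₁ ⬝ᵥ x with ha
    set b : ℝ := g₂ ⬝ᵥ x with hb
    have gram : ∀ s t : ℝ, 0 ≤ 1 - 2*s*a - 2*t*b + s^2 + t^2 + 2*s*t*c := by
      intro s t
      have h0 : 0 ≤ (x - s•g₁ - t•g₂) ⬝ᵥ (x - s•g₁ - t•g₂) :=
        Finset.sum_nonneg fun i _ => mul_self_nonneg _
      have hexp : (x - s•g₁ - t•g₂) ⬝ᵥ (x - s•g₁ - t•g₂)
          = 1 - 2*s*a - 2*t*b + s^2 + t^2 + 2*s*t*c := by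
        simp only [dotProduct_sub, sub_dotProduct, dotProduct_smul, smul_dotProduct,
          smul_eq_mul, hg₁, hg₂, hx]
        rw [dotProduct_comm x g₁, dotProduct_comm x g₂, dotProduct_comm g₂ g₁, ← ha, ← hb, ← hc]
        ring
      linarith [hexp ▸ h0]
    have ha1 : a^2 ≤ 1 := by nlinarith [gram a 0]
    have hb1 : b^2 ≤ 1 := by nlinarith [gram 0 b]
    rcases eq_or_lt_of_le hcle with h1 | h1
    · nlinarith [abs_nonneg c]
    · have hD : (0:ℝ) < 1 - c^2 := by nlinarith [sq_abs c, abs_nonneg c]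
      have hDne : (1 - c^2) ≠ 0 := ne_of_gt hD
      set s0 : ℝ := (a - c*b)/(1 - c^2) with hs0
      set t0 : ℝ := (b - c*a)/(1 - c^2) with ht0
      have hid : (1 - c^2) - (a^2 + b^2 - 2*a*b*c)
          = (1 - c^2) * (1 - 2*s0*a - 2*t0*b + s0^2 + t0^2 + 2*s0*t0*c) := by
        rw [hs0, ht0]
        field_simp
        ring
      have h' : a^2 + b^2 - 2*a*b*c ≤ 1 - c^2 := by
        nlinarith [mul_nonneg hD.le (gram s0 t0), hid]
      have hac : c ≤ |c| := le_abs_self c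
      have hac' : -c ≤ |c| := neg_le_abs c
      nlinarith [mul_nonneg (sub_nonneg.2 hac) (sq_nonneg (a+b)),
        mul_nonneg (sub_nonneg.2 hac') (sq_nonneg (a-b)), sq_abs c, h']
  -- every eigenvalue is ≥ 1 - |c|
  have lower : ∀ i, 1 - |c| ≤ hS.eigenvalues i := by
    intro i
    set x : Fin 3 → ℝ := ⇑(hS.eigenvectorBasis i) with hxdef
    have hx1 : x ⬝ᵥ x = 1 := by
      have hn := hS.eigenvectorBasis.orthonormal.1 i
      have : (x ⬝ᵥ x) = ⟪hS.eigenvectorBasis i, hS.eigenvectorBasis i⟫ := by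
        simp only [PiLp.inner_apply, RCLike.inner_apply, conj_trivial, dotProduct, hxdef]
      rw [this, real_inner_self_eq_norm_sq, hn]; norm_num
    have he := hS.mulVec_eigenvectorBasis i
    have h1 : x ⬝ᵥ (S *ᵥ x) = hS.eigenvalues i := by
      rw [he, ← hxdef]; simp [dotProduct_smul, hx1]
    have h2 := hdot x x
    rw [hx1, dotProduct_comm x g₁, dotProduct_comm x g₂] at h2
    have := key x hx1
    nlinarith [h1 ▸ h2]
  -- 1 - |c| is an eigenvalue
  have exv : ∃ v : Fin 3 → ℝ, v ≠ 0 ∧ S *ᵥ v = (1 - |c|) • v := by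
    rcases le_or_gt 0 c with h0 | h0
    · refine ⟨g₁ + g₂, ?_, ?_⟩
      · intro hv
        have : (g₁ + g₂) ⬝ᵥ (g₁ + g₂) = 0 := by rw [hv]; simp
        rw [dotProduct_add, add_dotProduct, add_dotProduct, hg₁, hg₂,
          dotProduct_comm g₂ g₁, ← hc] at this
        linarith
      · rw [hSmul, dotProduct_add, dotProduct_add, hg₁, hg₂, dotProduct_comm g₂ g₁, ← hc,
          abs_of_nonneg h0]
        funext i
        simp only [Pi.add_apply, Pi.sub_apply, Pi.smul_apply, smul_eq_mul]
        ring
    · refine ⟨g₁ - g₂, ?_, ?_⟩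
      · intro hv
        have : (g₁ - g₂) ⬝ᵥ (g₁ - g₂) = 0 := by rw [hv]; simp
        rw [dotProduct_sub, sub_dotProduct, sub_dotProduct, hg₁, hg₂,
          dotProduct_comm g₂ g₁, ← hc] at this
        linarith
      · rw [hSmul, dotProduct_sub, dotProduct_sub, hg₁, hg₂, dotProduct_comm g₂ g₁, ← hc,
          abs_of_neg h0]
        funext i
        simp only [Pi.add_apply, Pi.sub_apply, Pi.smul_apply, smul_eq_mul]
        ring
  obtain ⟨v, hvne, hev⟩ := exv
  have exi : ∃ i, hS.eigenvalues i = 1 - |c| := by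
    by_contra hcon
    push_neg at hcon
    have horth : ∀ i, ⟪hS.eigenvectorBasis i, (WithLp.toLp 2 v : EuclideanSpace ℝ (Fin 3))⟫ = 0 := by
      intro i
      set x : Fin 3 → ℝ := ⇑(hS.eigenvectorBasis i) with hxdef
      have hsym : x ⬝ᵥ (S *ᵥ v) = v ⬝ᵥ (S *ᵥ x) := by
        rw [hdot, hdot, dotProduct_comm x v, dotProduct_comm x g₁, dotProduct_comm x g₂,
          dotProduct_comm v g₁, dotProduct_comm v g₂]
        ring
      have he := hS.mulVec_eigenvectorBasis i
      have h1 : x ⬝ᵥ (S *ᵥ v) = (1 - |c|) * (x ⬝ᵥ v) := by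
        rw [hev]; simp [dotProduct_smul]
      have h2 : v ⬝ᵥ (S *ᵥ x) = hS.eigenvalues i * (v ⬝ᵥ x) := by
        rw [hxdef, he, dotProduct_smul, smul_eq_mul]
      rw [h1, h2, dotProduct_comm v x] at hsym
      have hxv : x ⬝ᵥ v = 0 := by
        by_contra hne
        exact hcon i (mul_right_cancel₀ hne hsym).symm
      have : ⟪hS.eigenvectorBasis i, (WithLp.toLp 2 v : EuclideanSpace ℝ (Fin 3))⟫ = x ⬝ᵥ v := by
        simp [PiLp.inner_apply, RCLike.inner_apply, conj_trivial, dotProduct, hxdef, mul_comm]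
      rw [this, hxv]
    have hrepr : hS.eigenvectorBasis.repr (WithLp.toLp 2 v : EuclideanSpace ℝ (Fin 3)) = 0 := by
      ext i
      rw [hS.eigenvectorBasis.repr_apply_apply]
      exact horth i
    have : (WithLp.toLp 2 v : EuclideanSpace ℝ (Fin 3)) = 0 := by
      have := hS.eigenvectorBasis.repr.map_eq_zero_iff.1 hrepr
      exact this
    exact hvne (by simpa using congrArg WithLp.ofLp this)
  obtain ⟨i0, hi0⟩ := exi
  apply le_antisymm
  · exact hi0 ▸ ciInf_le (Set.finite_range _).bddBelow i0
  · exact le_ciInf lower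
end

section
/- Let {P_j}_{j∈J} be a finite family of 3×3 orthogonal projection matrices P_j = I - g_j g_j^T with unit vectors g_j, let α_j ≥ α_0 > 0 be weights, and suppose there exist indices i, j ∈ J such that the angle θ between g_i and g_j satisfies θ_0 ≤ θ ≤ π - θ_0 for some θ_0 ∈ (0, π/2). Then the smallest eigenvalue of Σ_j α_j P_j is at least α_0 (1 - cos θ_0). -/
open Matrix Real

/-- Cauchy–Schwarz for `dotProduct`. -/
lemma dot_sq_le {n : ℕ} (w x : Fin n → ℝ) :
    (w ⬝ᵥ x) ^ 2 ≤ (w ⬝ᵥ w) * (x ⬝ᵥ x) := by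
  have := Finset.sum_mul_sq_le_sq_mul_sq Finset.univ w x
  simpa [dotProduct, pow_two] using this

lemma dot_sum_right {n : Type*} [Fintype n] {J : Type*} [Fintype J]
    (v : n → ℝ) (f : J → n → ℝ) :
    v ⬝ᵥ (∑ l, f l) = ∑ l, v ⬝ᵥ f l := by
  simp only [dotProduct, Finset.sum_apply, Finset.mul_sum]
  exact Finset.sum_comm

lemma vecMulVec_mulVec' (u w : Fin 3 → ℝ) :
    Matrix.vecMulVec u u *ᵥ w = (u ⬝ᵥ w) • u := by
  funext k
  simp only [Matrix.mulVec, dotProduct, Matrix.vecMulVec_apply, Pi.smul_apply,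
    smul_eq_mul]
  rw [Finset.sum_mul]
  exact Finset.sum_congr rfl fun x _ => by ring

/-- Key geometric lemma: for unit vectors `u v x`,
`(u⋅x)² + (v⋅x)² ≤ 1 + |u⋅v|`. -/
lemma key_ineq (u v x : Fin 3 → ℝ) (hu : u ⬝ᵥ u = 1) (hv : v ⬝ᵥ v = 1)
    (hx : x ⬝ᵥ x = 1) :
    (u ⬝ᵥ x) ^ 2 + (v ⬝ᵥ x) ^ 2 ≤ 1 + |u ⬝ᵥ v| := by
  set a := u ⬝ᵥ x with ha
  set b := v ⬝ᵥ x with hb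
  set c := u ⬝ᵥ v with hc
  set s := a ^ 2 + b ^ 2 with hs
  set w := a • u + b • v with hw
  have hw1 : w ⬝ᵥ x = s := by
    simp only [hw, add_dotProduct, smul_dotProduct, smul_eq_mul, ← ha, ← hb, hs]
    ring
  have hw2 : w ⬝ᵥ w = s + 2 * a * b * c := by
    simp only [hw, add_dotProduct, dotProduct_add, smul_dotProduct, dotProduct_smul,
      smul_eq_mul, hu, hv, ← hc, dotProduct_comm v u, hs]
    ring
  have hcs : s ^ 2 ≤ s + 2 * a * b * c := by
    have := dot_sq_le w x
    rw [hw1, hw2, hx, mul_one] at this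
    exact this
  have habs : 2 * a * b * c ≤ s * |c| := by
    have h1 : 2 * a * b * c ≤ 2 * (|a| * |b|) * |c| := by
      calc 2 * a * b * c ≤ |2 * a * b * c| := le_abs_self _
        _ = 2 * (|a| * |b|) * |c| := by
            rw [abs_mul, abs_mul, abs_mul, abs_two]; ring
    have h2 : 2 * (|a| * |b|) ≤ s := by
      rw [hs]
      nlinarith [sq_nonneg (|a| - |b|), sq_abs a, sq_abs b]
    calc 2 * a * b * c ≤ 2 * (|a| * |b|) * |c| := h1
      _ ≤ s * |c| := mul_le_mul_of_nonneg_right h2 (abs_nonneg _)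
  have hs2 : s ^ 2 ≤ s * (1 + |c|) := by nlinarith
  have hsnn : 0 ≤ s := by positivity
  rcases eq_or_lt_of_le hsnn with h0 | h0
  · have hz : s = 0 := h0.symm
    rw [hz]
    positivity
  · have := (mul_le_mul_iff_right₀ h0).mp (by nlinarith : s * s ≤ s * (1 + |c|))
    exact this

/-- Let `{P_j}` be a finite family of 3×3 orthogonal projection matrices
`P_j = I - g_j g_jᵀ` with unit vectors `g_j`, weights `α_j ≥ α₀ > 0`, and suppose
there are indices `i, j` such that the angle `θ` between `g_i` and `g_j`
satisfies `θ₀ ≤ θ ≤ π - θ₀` with `θ₀ ∈ (0, π/2)`. Then the smallest eigenvalue of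
`Σ_j α_j P_j` is at least `α₀ (1 - cos θ₀)`. -/
theorem stmt_5 {J : Type*} [Fintype J]
    (g : J → (Fin 3 → ℝ)) (hg : ∀ j, g j ⬝ᵥ g j = 1)
    (α : J → ℝ) (α₀ : ℝ) (hα₀ : 0 < α₀) (hα : ∀ j, α₀ ≤ α j)
    (i j : J) (θ θ₀ : ℝ) (hθ₀ : θ₀ ∈ Set.Ioo 0 (π / 2))
    (hθmem : θ ∈ Set.Ico 0 π)
    (hcos : Real.cos θ = g i ⬝ᵥ g j)
    (hθ : θ₀ ≤ θ ∧ θ ≤ π - θ₀)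
    (hS : (∑ l, α l • (1 - vecMulVec (g l) (g l)) :
      Matrix (Fin 3) (Fin 3) ℝ).IsHermitian) :
    α₀ * (1 - Real.cos θ₀) ≤ ⨅ idx, hS.eigenvalues idx := by
  obtain ⟨hθ₀pos, hθ₀lt⟩ := hθ₀
  obtain ⟨hθ0, hθπ⟩ := hθmem
  obtain ⟨hθ1, hθ2⟩ := hθ
  -- |cos θ| ≤ cos θ₀
  have hcosθ₀pos : 0 < Real.cos θ₀ := Real.cos_pos_of_mem_Ioo
    ⟨by linarith [Real.pi_pos], hθ₀lt⟩
  have habs : |Real.cos θ| ≤ Real.cos θ₀ := by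
    rw [abs_le]
    constructor
    · have : Real.cos (π - θ₀) ≤ Real.cos θ :=
        Real.cos_le_cos_of_nonneg_of_le_pi hθ0 (by linarith) hθ2
      rwa [Real.cos_pi_sub] at this
    · exact Real.cos_le_cos_of_nonneg_of_le_pi hθ₀pos.le hθπ.le hθ1
  -- i ≠ j
  have hij : i ≠ j := by
    intro h
    rw [h, hg j] at hcos
    have := (abs_le.mp habs).2
    have hlt : Real.cos θ₀ < 1 := by
      have h := Real.strictAntiOn_cos (Set.mem_Icc.2 ⟨le_rfl, Real.pi_pos.le⟩)
        (Set.mem_Icc.2 ⟨hθ₀pos.le, by linarith [Real.pi_pos]⟩) hθ₀pos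
      rwa [Real.cos_zero] at h
    rw [hcos] at this
    linarith
  classical
  set S : Matrix (Fin 3) (Fin 3) ℝ := ∑ l, α l • (1 - vecMulVec (g l) (g l)) with hSdef
  apply le_ciInf
  intro idx
  set v : Fin 3 → ℝ := ⇑(hS.eigenvectorBasis idx) with hvdef
  have hveq : S *ᵥ v = hS.eigenvalues idx • v := hS.mulVec_eigenvectorBasis idx
  have hvnorm : v ⬝ᵥ v = 1 := by
    have h1 : ‖hS.eigenvectorBasis idx‖ = 1 := hS.eigenvectorBasis.orthonormal.1 idx
    have h2 : (inner ℝ (hS.eigenvectorBasis idx) (hS.eigenvectorBasis idx) : ℝ) = 1 := by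
      rw [real_inner_self_eq_norm_sq, h1]; norm_num
    rw [PiLp.inner_apply] at h2
    simpa [dotProduct, RCLike.inner_apply, pow_two] using h2
  -- compute v ⬝ᵥ S *ᵥ v
  have hproj : ∀ l, (1 - vecMulVec (g l) (g l)) *ᵥ v = v - (g l ⬝ᵥ v) • g l := by
    intro l
    rw [Matrix.sub_mulVec, Matrix.one_mulVec, vecMulVec_mulVec']
  have hsum : S *ᵥ v = ∑ l, (α l • (1 - vecMulVec (g l) (g l))) *ᵥ v := by
    funext k
    simp only [hSdef, Matrix.mulVec, dotProduct, Matrix.sum_apply, Finset.sum_mul,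
      Finset.sum_apply]
    exact Finset.sum_comm
  have hquad : v ⬝ᵥ (S *ᵥ v) = ∑ l, α l * (1 - (g l ⬝ᵥ v) ^ 2) := by
    rw [hsum, dot_sum_right]
    congr 1
    funext l
    rw [Matrix.smul_mulVec, hproj l, dotProduct_smul]
    rw [dotProduct_sub, dotProduct_smul]
    simp only [smul_eq_mul, hvnorm]
    rw [dotProduct_comm v (g l)]
    ring
  have heig : v ⬝ᵥ (S *ᵥ v) = hS.eigenvalues idx := by
    rw [hveq, dotProduct_smul, smul_eq_mul, hvnorm, mul_one]
  -- each summand is nonneg, and bounded below on {i, j}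
  have hterm_nonneg : ∀ l, 0 ≤ α l * (1 - (g l ⬝ᵥ v) ^ 2) := by
    intro l
    have h1 : (g l ⬝ᵥ v) ^ 2 ≤ 1 := by
      have := dot_sq_le (g l) v
      rwa [hg l, hvnorm, one_mul] at this
    have := (hα₀.trans_le (hα l)).le
    nlinarith
  have hsum_ge : α₀ * (1 - (g i ⬝ᵥ v) ^ 2) + α₀ * (1 - (g j ⬝ᵥ v) ^ 2)
      ≤ ∑ l, α l * (1 - (g l ⬝ᵥ v) ^ 2) := by
    have hsub : ({i, j} : Finset J) ⊆ Finset.univ := Finset.subset_univ _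
    have h1 : ∑ l ∈ ({i, j} : Finset J), α l * (1 - (g l ⬝ᵥ v) ^ 2)
        ≤ ∑ l, α l * (1 - (g l ⬝ᵥ v) ^ 2) :=
      Finset.sum_le_sum_of_subset_of_nonneg hsub (fun l _ _ => hterm_nonneg l)
    rw [Finset.sum_pair hij] at h1
    refine le_trans (add_le_add ?_ ?_) h1
    · refine mul_le_mul_of_nonneg_right (hα i) ?_
      have := dot_sq_le (g i) v
      rw [hg i, hvnorm, one_mul] at this
      linarith
    · refine mul_le_mul_of_nonneg_right (hα j) ?_
      have := dot_sq_le (g j) v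
      rw [hg j, hvnorm, one_mul] at this
      linarith
  have hkey : (g i ⬝ᵥ v) ^ 2 + (g j ⬝ᵥ v) ^ 2 ≤ 1 + Real.cos θ₀ := by
    have := key_ineq (g i) (g j) v (hg i) (hg j) hvnorm
    rw [← hcos] at this
    linarith
  have : α₀ * (1 - Real.cos θ₀) ≤ α₀ * (1 - (g i ⬝ᵥ v) ^ 2) + α₀ * (1 - (g j ⬝ᵥ v) ^ 2) := by
    nlinarith
  have hfin : α₀ * (1 - Real.cos θ₀) ≤ v ⬝ᵥ (S *ᵥ v) := by
    rw [hquad]; linarith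
  rw [heig] at hfin
  exact hfin
end

section
/- Let F_t = [[1, (t-k)Δt], [(t-k)Δt, (t-k)²Δt²]] for integers t ≤ k. Then each F_t is symmetric positive semi-definite, and for positive weights λ_t with λ_k ≥ λ_{k-1}, the smallest eigenvalue of Σ_{t=1}^{k} λ_t F_t is at least λ_{k-1} · (2 + Δt² - √(4 + Δt⁴))/2. -/
open Matrix

lemma sum_mulVec' {α : Type*} (s : Finset α) (f : α → Matrix (Fin 2) (Fin 2) ℝ)
    (v : Fin 2 → ℝ) : (∑ t ∈ s, f t) *ᵥ v = ∑ t ∈ s, f t *ᵥ v := by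
  induction s using Finset.cons_induction with
  | empty => simp
  | cons a s ha ih => simp [Matrix.add_mulVec, ih]

lemma dot_sum' {α : Type*} (s : Finset α) (f : α → (Fin 2 → ℝ)) (v : Fin 2 → ℝ) :
    v ⬝ᵥ (∑ t ∈ s, f t) = ∑ t ∈ s, v ⬝ᵥ f t := by
  induction s using Finset.cons_induction with
  | empty => simp
  | cons a s ha ih => simp [dotProduct_add, ih]

lemma psd_vecMulVec (v : Fin 2 → ℝ) : (vecMulVec v v).PosSemidef := by
  rw [posSemidef_iff_dotProduct_mulVec]
  constructor
  · ext i j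
    simp [Matrix.IsHermitian, vecMulVec, conjTranspose, mul_comm]
  · intro x
    have : dotProduct (star x) (vecMulVec v v *ᵥ x)
        = (v 0 * x 0 + v 1 * x 1) ^ 2 := by
      simp [dotProduct, vecMulVec, mulVec, Fin.sum_univ_two]
      ring
    rw [this]
    positivity

/-- Let `F_t = [[1, (t-k)Δt], [(t-k)Δt, (t-k)²Δt²]]` for `t = 1, …, k`. Then each
`F_t` is symmetric positive semi-definite, and for positive weights `λ_t` which are
nondecreasing in `t`, the smallest eigenvalue of `Σ_{t=1}^{k} λ_t F_t` is at least
`λ_{k-1} · (2 + Δt² - √(4 + Δt⁴))/2`. -/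
theorem stmt_12 (k : ℕ) (hk : 2 ≤ k) (Δt : ℝ) (hΔt : 0 < Δt)
    (lam : ℕ → ℝ)
    (hpos : ∀ t, 1 ≤ t → t ≤ k → 0 < lam t)
    (hmono : ∀ t, 2 ≤ t → t ≤ k → lam (t - 1) ≤ lam t)
    (F : ℕ → Matrix (Fin 2) (Fin 2) ℝ)
    (hF : ∀ t, F t =
      vecMulVec ![1, ((t : ℝ) - (k : ℝ)) * Δt] ![1, ((t : ℝ) - (k : ℝ)) * Δt])
    (hS : (∑ t ∈ Finset.Icc 1 k, lam t • F t).IsHermitian) :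
    (∀ t, (F t).PosSemidef) ∧
      lam (k - 1) * ((2 + Δt ^ 2 - Real.sqrt (4 + Δt ^ 4)) / 2) ≤
        ⨅ i, hS.eigenvalues i := by
  set S := ∑ t ∈ Finset.Icc 1 k, lam t • F t with hSdef
  set s := Real.sqrt (4 + Δt ^ 4) with hs_def
  have hs0 : 0 ≤ s := Real.sqrt_nonneg _
  have hs2 : s ^ 2 = 4 + Δt ^ 4 := Real.sq_sqrt (by positivity)
  set c := lam (k - 1) * ((2 + Δt ^ 2 - s) / 2) with hc_def
  -- key quadratic form bound
  have key : ∀ v : Fin 2 → ℝ, v 0 ^ 2 + v 1 ^ 2 = 1 → c ≤ dotProduct v (S *ᵥ v) := by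
    intro v hv
    -- rewrite quadratic form as sum
    have hform : dotProduct v (S *ᵥ v)
        = ∑ t ∈ Finset.Icc 1 k, lam t * (v 0 + ((t : ℝ) - (k : ℝ)) * Δt * v 1) ^ 2 := by
      rw [hSdef, sum_mulVec', dot_sum']
      refine Finset.sum_congr rfl fun t _ => ?_
      rw [hF t]
      simp [dotProduct, vecMulVec, mulVec, Fin.sum_univ_two, smul_eq_mul]
      ring
    rw [hform]
    have hnonneg : ∀ t ∈ Finset.Icc 1 k,
        0 ≤ lam t * (v 0 + ((t : ℝ) - (k : ℝ)) * Δt * v 1) ^ 2 := by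
      intro t ht
      simp only [Finset.mem_Icc] at ht
      exact mul_nonneg (hpos t ht.1 ht.2).le (sq_nonneg _)
    have hsub : ({k - 1, k} : Finset ℕ) ⊆ Finset.Icc 1 k := by
      intro x hx
      simp only [Finset.mem_insert, Finset.mem_singleton] at hx
      rcases hx with rfl | rfl <;> simp [Finset.mem_Icc] <;> omega
    have hge : ∑ t ∈ ({k - 1, k} : Finset ℕ),
          lam t * (v 0 + ((t : ℝ) - (k : ℝ)) * Δt * v 1) ^ 2
        ≤ ∑ t ∈ Finset.Icc 1 k, lam t * (v 0 + ((t : ℝ) - (k : ℝ)) * Δt * v 1) ^ 2 :=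
      Finset.sum_le_sum_of_subset_of_nonneg hsub (fun t ht _ => hnonneg t ht)
    have hne : (k - 1 : ℕ) ≠ k := by omega
    rw [Finset.sum_insert (by simpa using hne), Finset.sum_singleton] at hge
    have hcast : ((k - 1 : ℕ) : ℝ) - (k : ℝ) = -1 := by
      have : ((k - 1 : ℕ) : ℝ) = (k : ℝ) - 1 := by
        push_cast [Nat.cast_sub (by omega : 1 ≤ k)]; ring
      rw [this]; ring
    have hcast2 : ((k : ℕ) : ℝ) - (k : ℝ) = 0 := by ring
    rw [hcast, hcast2] at hge
    refine le_trans ?_ hge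
    -- now a pure two-term inequality
    have hlk : lam (k - 1) ≤ lam k := by
      have := hmono k hk le_rfl
      exact this
    have hl0 : 0 < lam (k - 1) := hpos (k - 1) (by omega) (by omega)
    have hspos : 0 < 2 - Δt ^ 2 + s := by
      nlinarith [sq_nonneg (s + Δt ^ 2 - 2), sq_nonneg Δt, mul_pos hΔt hΔt]
    have hquad : (2 + Δt ^ 2 - s) / 2 ≤ (v 0 + -1 * Δt * v 1) ^ 2 + (v 0 + 0 * Δt * v 1) ^ 2 := by
      have hs2' : s ^ 2 * v 1 ^ 2 = (4 + Δt ^ 4) * v 1 ^ 2 := by rw [hs2]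
      have h1 : 0 ≤ (2 - Δt ^ 2 + s) *
          (2 * ((v 0 + -1 * Δt * v 1) ^ 2 + (v 0 + 0 * Δt * v 1) ^ 2)
            - (2 + Δt ^ 2 - s) * (v 0 ^ 2 + v 1 ^ 2)) := by
        nlinarith [sq_nonneg ((2 - Δt ^ 2 + s) * v 0 - 2 * Δt * v 1), hs2']
      have h2 : 0 ≤ 2 * ((v 0 + -1 * Δt * v 1) ^ 2 + (v 0 + 0 * Δt * v 1) ^ 2)
            - (2 + Δt ^ 2 - s) * (v 0 ^ 2 + v 1 ^ 2) := by
        nlinarith [h1, hspos]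
      have hv' : (2 + Δt ^ 2 - s) * (v 0 ^ 2 + v 1 ^ 2) = 2 + Δt ^ 2 - s := by rw [hv]; ring
      linarith [h2, hv']
    have h1 : lam (k - 1) * ((v 0 + -1 * Δt * v 1) ^ 2 + (v 0 + 0 * Δt * v 1) ^ 2)
        ≤ lam (k - 1) * (v 0 + -1 * Δt * v 1) ^ 2 + lam k * (v 0 + 0 * Δt * v 1) ^ 2 := by
      nlinarith [sq_nonneg (v 0 + 0 * Δt * v 1), hlk, hl0]
    calc c ≤ lam (k - 1) * ((v 0 + -1 * Δt * v 1) ^ 2 + (v 0 + 0 * Δt * v 1) ^ 2) := by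
            rw [hc_def]
            exact mul_le_mul_of_nonneg_left hquad hl0.le
      _ ≤ _ := h1
  constructor
  · intro t
    rw [hF t]
    exact psd_vecMulVec _
  · refine le_ciInf fun i => ?_
    have hv := hS.eigenvectorBasis.orthonormal.1 i
    set v : EuclideanSpace ℝ (Fin 2) := hS.eigenvectorBasis i with hvdef
    have hnorm : v 0 ^ 2 + v 1 ^ 2 = 1 := by
      have h1 : ‖v‖ = 1 := hv
      have h2 : ‖v‖ ^ 2 = 1 := by rw [h1]; norm_num
      rw [EuclideanSpace.norm_eq] at h2
      rw [Real.sq_sqrt (by positivity)] at h2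
      simpa [Fin.sum_univ_two, sq_abs, Real.norm_eq_abs] using h2
    have heig := hS.eigenvalues_eq i
    have : hS.eigenvalues i = dotProduct (v : Fin 2 → ℝ) (S *ᵥ (v : Fin 2 → ℝ)) := by
      rw [heig]
      simp only [star_trivial, RCLike.re_to_real]
      rfl
    rw [this]
    exact key _ hnorm
end
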